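/- Let Γ be a k-regular graph with no 4-claws, where every edge lies in exactly a₁ triangles and k > (8/3)(a₁+1). Define a line to be a maximal clique with at least k − 2(a₁+1) + 1 vertices. Then every edge of Γ lies in a unique line. -/

import Mathlib

open SimpleGraph Finset

/-- A *line* of `G` (with respect to `k`, `a₁`): a maximal clique with at least
`k − 2(a₁+1) + 1` vertices. -/
def IsLine {V : Type*} (G : SimpleGraph V) (k a₁ : ℕ) (s : Finset V) : Prop :=
  G.IsClique (s : Set V) ∧
  (∀ t : Finset V, G.IsClique (t : Set V) → s ⊆ t → s = t) ∧
  (s.card : ℤ) ≥ (k : ℤ) - 2 * ((a₁ : ℤ) + 1) + 1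

section Aux

variable {V : Type*} [Fintype V] [DecidableEq V] {G : SimpleGraph V} [DecidableRel G.Adj]

private lemma exists_maximal_clique (s : Finset V) (hs : G.IsClique (s : Set V)) :
    ∃ t : Finset V, s ⊆ t ∧ G.IsClique (t : Set V) ∧
      ∀ t' : Finset V, G.IsClique (t' : Set V) → t ⊆ t' → t = t' := by
  classical
  obtain ⟨t, ht, hmax⟩ := Finset.exists_max_image
    ((Finset.univ : Finset (Finset V)).filter
      (fun u => s ⊆ u ∧ G.IsClique (u : Set V))) Finset.card
    ⟨s, by simp [hs]⟩
  simp only [Finset.mem_filter, Finset.mem_univ, true_and] at ht hmax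
  refine ⟨t, ht.1, ht.2, fun t' hc hsub => Finset.eq_of_subset_of_card_le hsub ?_⟩
  exact hmax t' ⟨ht.1.trans hsub, hc⟩

private lemma clique_card_le {a₁ : ℕ}
    (ha : ∀ x y : V, G.Adj x y →
      ((G.neighborFinset x) ∩ (G.neighborFinset y)).card = a₁)
    {s : Finset V} (hs : G.IsClique (s : Set V)) {a b : V}
    (haa : a ∈ s) (hbb : b ∈ s) (hab : a ≠ b) : s.card ≤ a₁ + 2 := by
  have hadj : G.Adj a b := hs haa hbb hab
  have hsub : s ⊆ insert a (insert b (G.neighborFinset a ∩ G.neighborFinset b)) := by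
    intro v hv
    by_cases h1 : v = a
    · simp [h1]
    by_cases h2 : v = b
    · simp [h2]
    have h3 : G.Adj a v := hs haa hv (fun h => h1 h.symm)
    have h4 : G.Adj b v := hs hbb hv (fun h => h2 h.symm)
    simp only [Finset.mem_insert, Finset.mem_inter, mem_neighborFinset]
    exact Or.inr (Or.inr ⟨h3, h4⟩)
  calc s.card ≤ _ := Finset.card_le_card hsub
    _ ≤ (insert b (G.neighborFinset a ∩ G.neighborFinset b)).card + 1 :=
        Finset.card_insert_le _ _
    _ ≤ (G.neighborFinset a ∩ G.neighborFinset b).card + 1 + 1 := by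
        have := Finset.card_insert_le b (G.neighborFinset a ∩ G.neighborFinset b)
        omega
    _ = a₁ + 2 := by rw [ha a b hadj]

private lemma noclaw_four
    (hnoclaw : ¬ ∃ x y₁ y₂ y₃ y₄ : V,
      G.Adj x y₁ ∧ G.Adj x y₂ ∧ G.Adj x y₃ ∧ G.Adj x y₄ ∧
      List.Pairwise (fun a b => a ≠ b ∧ ¬ G.Adj a b) [y₁, y₂, y₃, y₄])
    {c a b p q : V} (hca : G.Adj c a) (hcb : G.Adj c b) (hcp : G.Adj c p) (hcq : G.Adj c q)
    (hab : a ≠ b) (nab : ¬ G.Adj a b)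
    (hap : a ≠ p) (nap : ¬ G.Adj a p)
    (haq : a ≠ q) (naq : ¬ G.Adj a q)
    (hbp : b ≠ p) (nbp : ¬ G.Adj b p)
    (hbq : b ≠ q) (nbq : ¬ G.Adj b q)
    (hpq : p ≠ q) (npq : ¬ G.Adj p q) : False := by
  refine hnoclaw ⟨c, a, b, p, q, hca, hcb, hcp, hcq, ?_⟩
  refine List.Pairwise.cons ?_ (List.Pairwise.cons ?_ (List.Pairwise.cons ?_ (List.pairwise_singleton _ _)))
  · intro z hz
    rcases List.mem_cons.mp hz with rfl | hz
    · exact ⟨hab, nab⟩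
    rcases List.mem_cons.mp hz with rfl | hz
    · exact ⟨hap, nap⟩
    rcases List.mem_cons.mp hz with rfl | hz
    · exact ⟨haq, naq⟩
    · exact absurd hz List.not_mem_nil
  · intro z hz
    rcases List.mem_cons.mp hz with rfl | hz
    · exact ⟨hbp, nbp⟩
    rcases List.mem_cons.mp hz with rfl | hz
    · exact ⟨hbq, nbq⟩
    · exact absurd hz List.not_mem_nil
  · intro z hz
    rcases List.mem_cons.mp hz with rfl | hz
    · exact ⟨hpq, npq⟩
    · exact absurd hz List.not_mem_nil

/-- Greedy construction of a 4-claw from a set of neighbours of `x` with small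
internal degrees. -/
private lemma greedy_claw
    (hnoclaw : ¬ ∃ x y₁ y₂ y₃ y₄ : V,
      G.Adj x y₁ ∧ G.Adj x y₂ ∧ G.Adj x y₃ ∧ G.Adj x y₄ ∧
      List.Pairwise (fun a b => a ≠ b ∧ ¬ G.Adj a b) [y₁, y₂, y₃, y₄])
    (x : V) (T : Finset V) (hT : T ⊆ G.neighborFinset x) (b : ℤ)
    (hdeg : ∀ v ∈ T, ((G.neighborFinset v ∩ T).card : ℤ) ≤ b)
    (hne : T.Nonempty)
    (hcard : 3 * b + 4 ≤ (T.card : ℤ)) : False := by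
  obtain ⟨v₁, hv₁⟩ := hne
  have hb : 0 ≤ b := le_trans (Int.ofNat_nonneg _) (hdeg v₁ hv₁)
  -- step function
  have step : ∀ (S : Finset V) (v : V), S ⊆ T → v ∈ S →
      ((S \ insert v (G.neighborFinset v)).card : ℤ) ≥ (S.card : ℤ) - (b + 1) := by
    intro S v hS hv
    have h1 : (S ∩ insert v (G.neighborFinset v)).card ≤ (G.neighborFinset v ∩ T).card + 1 := by
      have : S ∩ insert v (G.neighborFinset v) ⊆ insert v (G.neighborFinset v ∩ T) := by
        intro w hw
        simp only [Finset.mem_inter, Finset.mem_insert] at hw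
        rcases hw.2 with h | h
        · simp [h]
        · exact Finset.mem_insert.mpr (Or.inr (Finset.mem_inter.mpr ⟨h, hS hw.1⟩))
      calc (S ∩ insert v (G.neighborFinset v)).card ≤ _ := Finset.card_le_card this
        _ ≤ _ := Finset.card_insert_le _ _
    have h2 := Finset.card_sdiff_add_card_inter S (insert v (G.neighborFinset v))
    have h3 := hdeg v (hS hv)
    omega
  set T₂ := T \ insert v₁ (G.neighborFinset v₁) with hT₂
  have hc₂ : ((T₂.card : ℤ)) ≥ (T.card : ℤ) - (b + 1) := step T v₁ (le_refl _) hv₁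
  have hne₂ : T₂.Nonempty := by
    rw [← Finset.card_pos]
    have : (0 : ℤ) < T₂.card := by omega
    exact_mod_cast this
  obtain ⟨v₂, hv₂⟩ := hne₂
  set T₃ := T₂ \ insert v₂ (G.neighborFinset v₂) with hT₃
  have hT₂T : T₂ ⊆ T := Finset.sdiff_subset
  have hc₃ : ((T₃.card : ℤ)) ≥ (T₂.card : ℤ) - (b + 1) := step T₂ v₂ hT₂T hv₂
  have hne₃ : T₃.Nonempty := by
    rw [← Finset.card_pos]
    have : (0 : ℤ) < T₃.card := by omega
    exact_mod_cast this
  obtain ⟨v₃, hv₃⟩ := hne₃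
  set T₄ := T₃ \ insert v₃ (G.neighborFinset v₃) with hT₄
  have hT₃T : T₃ ⊆ T := Finset.sdiff_subset.trans hT₂T
  have hc₄ : ((T₄.card : ℤ)) ≥ (T₃.card : ℤ) - (b + 1) := step T₃ v₃ hT₃T hv₃
  have hne₄ : T₄.Nonempty := by
    rw [← Finset.card_pos]
    have : (0 : ℤ) < T₄.card := by omega
    exact_mod_cast this
  obtain ⟨v₄, hv₄⟩ := hne₄
  have hT₄T : T₄ ⊆ T := Finset.sdiff_subset.trans hT₃T
  -- extract facts
  have m21 : v₂ ∉ insert v₁ (G.neighborFinset v₁) := (Finset.mem_sdiff.mp hv₂).2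
  have hv₃₂ : v₃ ∈ T₂ := (Finset.mem_sdiff.mp hv₃).1
  have m31 : v₃ ∉ insert v₁ (G.neighborFinset v₁) := (Finset.mem_sdiff.mp hv₃₂).2
  have m32 : v₃ ∉ insert v₂ (G.neighborFinset v₂) := (Finset.mem_sdiff.mp hv₃).2
  have hv₄₃ : v₄ ∈ T₃ := (Finset.mem_sdiff.mp hv₄).1
  have hv₄₂ : v₄ ∈ T₂ := (Finset.mem_sdiff.mp hv₄₃).1
  have m41 : v₄ ∉ insert v₁ (G.neighborFinset v₁) := (Finset.mem_sdiff.mp hv₄₂).2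
  have m42 : v₄ ∉ insert v₂ (G.neighborFinset v₂) := (Finset.mem_sdiff.mp hv₄₃).2
  have m43 : v₄ ∉ insert v₃ (G.neighborFinset v₃) := (Finset.mem_sdiff.mp hv₄).2
  simp only [Finset.mem_insert, mem_neighborFinset, not_or] at m21 m31 m32 m41 m42 m43
  have adj : ∀ v ∈ T, G.Adj x v := by
    intro v hv
    have := hT hv
    rwa [mem_neighborFinset] at this
  exact noclaw_four hnoclaw (adj v₁ hv₁) (adj v₂ (hT₂T hv₂)) (adj v₃ (hT₃T hv₃))
    (adj v₄ (hT₄T hv₄))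
    (Ne.symm m21.1) m21.2 (Ne.symm m31.1) m31.2 (Ne.symm m41.1) m41.2
    (Ne.symm m32.1) m32.2 (Ne.symm m42.1) m42.2 (Ne.symm m43.1) m43.2


private lemma not_clique_exists {s : Finset V} (h : ¬ G.IsClique (s : Set V)) :
    ∃ a ∈ s, ∃ b ∈ s, a ≠ b ∧ ¬ G.Adj a b := by
  by_contra hcon
  push_neg at hcon
  exact h fun a haa b hbb hab =>
    hcon a (Finset.mem_coe.mp haa) b (Finset.mem_coe.mp hbb) hab

private lemma Q_clique_card {k a₁ : ℕ}
    (hreg : G.IsRegularOfDegree k)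
    (ha : ∀ x y : V, G.Adj x y →
      ((G.neighborFinset x) ∩ (G.neighborFinset y)).card = a₁)
    (hnoclaw : ¬ ∃ x y₁ y₂ y₃ y₄ : V,
      G.Adj x y₁ ∧ G.Adj x y₂ ∧ G.Adj x y₃ ∧ G.Adj x y₄ ∧
      List.Pairwise (fun a b => a ≠ b ∧ ¬ G.Adj a b) [y₁, y₂, y₃, y₄])
    {c u r : V} (hcu : G.Adj c u) (hcr : G.Adj c r) (hur : ¬ G.Adj u r) (hur' : u ≠ r) :
    G.IsClique (((G.neighborFinset c).filter
      (fun q => q ≠ u ∧ q ≠ r ∧ ¬ G.Adj q u ∧ ¬ G.Adj q r) : Finset V) : Set V) ∧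
    (k : ℤ) - 2 * a₁ - 2 +
      ((G.neighborFinset u ∩ G.neighborFinset r ∩ G.neighborFinset c).card : ℤ) ≤
      (((G.neighborFinset c).filter
        (fun q => q ≠ u ∧ q ≠ r ∧ ¬ G.Adj q u ∧ ¬ G.Adj q r)).card : ℤ) := by
  classical
  set Q := (G.neighborFinset c).filter
      (fun q => q ≠ u ∧ q ≠ r ∧ ¬ G.Adj q u ∧ ¬ G.Adj q r) with hQ
  constructor
  · intro q₁ h1 q₂ h2 hne
    by_contra hadj
    have h1' := Finset.mem_filter.mp (Finset.mem_coe.mp h1)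
    have h2' := Finset.mem_filter.mp (Finset.mem_coe.mp h2)
    have hq1c : G.Adj c q₁ := by have := h1'.1; rwa [mem_neighborFinset] at this
    have hq2c : G.Adj c q₂ := by have := h2'.1; rwa [mem_neighborFinset] at this
    obtain ⟨hq1u, hq1r, hq1nu, hq1nr⟩ := h1'.2
    obtain ⟨hq2u, hq2r, hq2nu, hq2nr⟩ := h2'.2
    exact noclaw_four hnoclaw hcu hcr hq1c hq2c hur' hur
      (Ne.symm hq1u) (fun h => hq1nu h.symm) (Ne.symm hq2u) (fun h => hq2nu h.symm)
      (Ne.symm hq1r) (fun h => hq1nr h.symm) (Ne.symm hq2r) (fun h => hq2nr h.symm)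
      hne hadj
  · have hsub : G.neighborFinset c ⊆
        Q ∪ ((G.neighborFinset u ∩ G.neighborFinset c) ∪
          (G.neighborFinset r ∩ G.neighborFinset c)) ∪ {u, r} := by
      intro q hq
      have hq' : G.Adj c q := by rwa [mem_neighborFinset] at hq
      simp only [Finset.mem_union, Finset.mem_insert, Finset.mem_singleton,
        Finset.mem_inter, mem_neighborFinset, hQ, Finset.mem_filter]
      by_cases e1 : q = u
      · exact Or.inr (Or.inl e1)
      by_cases e2 : q = r
      · exact Or.inr (Or.inr e2)
      by_cases e3 : G.Adj q u
      · exact Or.inl (Or.inr (Or.inl ⟨e3.symm, hq'⟩))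
      by_cases e4 : G.Adj q r
      · exact Or.inl (Or.inr (Or.inr ⟨e4.symm, hq'⟩))
      · exact Or.inl (Or.inl ⟨hq', e1, e2, e3, e4⟩)
    have h1 : (G.neighborFinset c).card ≤
        Q.card + ((G.neighborFinset u ∩ G.neighborFinset c) ∪
          (G.neighborFinset r ∩ G.neighborFinset c)).card + 2 := by
      calc (G.neighborFinset c).card ≤ _ := Finset.card_le_card hsub
        _ ≤ (Q ∪ ((G.neighborFinset u ∩ G.neighborFinset c) ∪
            (G.neighborFinset r ∩ G.neighborFinset c))).card + ({u, r} : Finset V).card :=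
          Finset.card_union_le _ _
        _ ≤ _ := by
          have h2 := Finset.card_union_le Q ((G.neighborFinset u ∩ G.neighborFinset c) ∪
            (G.neighborFinset r ∩ G.neighborFinset c))
          have h3 : ({u, r} : Finset V).card ≤ 2 := Finset.card_insert_le _ _ |>.trans (by simp)
          omega
    have h4 := Finset.card_union_add_card_inter
      (G.neighborFinset u ∩ G.neighborFinset c) (G.neighborFinset r ∩ G.neighborFinset c)
    have h5 : (G.neighborFinset u ∩ G.neighborFinset c) ∩
        (G.neighborFinset r ∩ G.neighborFinset c) =
        G.neighborFinset u ∩ G.neighborFinset r ∩ G.neighborFinset c := by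
      ext z
      simp only [Finset.mem_inter]
      tauto
    rw [h5] at h4
    have h6 : (G.neighborFinset u ∩ G.neighborFinset c).card = a₁ := ha u c hcu.symm
    have h7 : (G.neighborFinset r ∩ G.neighborFinset c).card = a₁ := ha r c hcr.symm
    have h8 : (G.neighborFinset c).card = k := hreg c
    omega

end Aux

/-- In a `k`-regular graph with no `4`-claws, every edge in exactly `a₁`
triangles and `k > (8/3)(a₁+1)`, every edge lies in a unique line. -/
theorem edge_in_unique_line {V : Type*} [Fintype V] [DecidableEq V]
    (G : SimpleGraph V) [DecidableRel G.Adj] (k a₁ : ℕ)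
    (hreg : G.IsRegularOfDegree k)
    (ha : ∀ x y : V, G.Adj x y →
      ((G.neighborFinset x) ∩ (G.neighborFinset y)).card = a₁)
    (hnoclaw : ¬ ∃ x y₁ y₂ y₃ y₄ : V,
      G.Adj x y₁ ∧ G.Adj x y₂ ∧ G.Adj x y₃ ∧ G.Adj x y₄ ∧
      List.Pairwise (fun a b => a ≠ b ∧ ¬ G.Adj a b) [y₁, y₂, y₃, y₄])
    (hk : (k : ℝ) > 8 / 3 * ((a₁ : ℝ) + 1)) :
    ∀ x y : V, G.Adj x y →
      ∃! s : Finset V, IsLine G k a₁ s ∧ x ∈ s ∧ y ∈ s := by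
  classical
  intro x y hxy
  have hk8 : (8 * (a₁ : ℤ) + 8) < 3 * (k : ℤ) := by
    exact_mod_cast (by nlinarith [hk] : (8 * (a₁ : ℝ) + 8) < 3 * (k : ℝ))
  have hk9 : 8 * (a₁ : ℤ) + 9 ≤ 3 * (k : ℤ) := by omega
  set Λ := G.neighborFinset x ∩ G.neighborFinset y with hΛ
  have hΛcard : Λ.card = a₁ := ha x y hxy
  have hxny : x ≠ y := G.ne_of_adj hxy
  have hxΛ : x ∉ Λ := by
    simp only [hΛ, Finset.mem_inter, mem_neighborFinset]
    exact fun h => G.irrefl h.1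
  have hyΛ : y ∉ Λ := by
    simp only [hΛ, Finset.mem_inter, mem_neighborFinset]
    exact fun h => G.irrefl h.2
  have hΛmem : ∀ v, v ∈ Λ → G.Adj x v ∧ G.Adj y v := by
    intro v hv
    rw [hΛ, Finset.mem_inter, mem_neighborFinset, mem_neighborFinset] at hv
    exact hv
  -- key uniqueness fact: any two lines through x,y coincide
  have key : ∀ s₁ s₂ : Finset V, (IsLine G k a₁ s₁ ∧ x ∈ s₁ ∧ y ∈ s₁) →
      (IsLine G k a₁ s₂ ∧ x ∈ s₂ ∧ y ∈ s₂) → s₁ = s₂ := by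
    rintro s₁ s₂ ⟨⟨hc₁, hm₁, hcard₁⟩, hx₁, hy₁⟩ ⟨⟨hc₂, hm₂, hcard₂⟩, hx₂, hy₂⟩
    by_contra hne
    have hnsub : ¬ s₁ ⊆ s₂ := fun h => hne (hm₁ s₂ hc₂ h)
    obtain ⟨u, hu₁, hu₂⟩ := Finset.not_subset.mp hnsub
    have hins : ¬ G.IsClique ((insert u s₂ : Finset V) : Set V) := by
      intro h
      have h2 := hm₂ (insert u s₂) h (Finset.subset_insert _ _)
      exact hu₂ (h2 ▸ Finset.mem_insert_self u s₂)
    obtain ⟨w₁, hw₁, w₂, hw₂, hww, hnadj⟩ := not_clique_exists hins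
    obtain ⟨w, hws₂, hwu, hnuw⟩ : ∃ w ∈ s₂, u ≠ w ∧ ¬ G.Adj u w := by
      rcases Finset.mem_insert.mp hw₁ with rfl | hw₁'
      · rcases Finset.mem_insert.mp hw₂ with rfl | hw₂'
        · exact absurd rfl hww
        · exact ⟨w₂, hw₂', hww, hnadj⟩
      · rcases Finset.mem_insert.mp hw₂ with rfl | hw₂'
        · exact ⟨w₁, hw₁', Ne.symm hww, fun h => hnadj h.symm⟩
        · exact absurd (hc₂ (Finset.mem_coe.mpr hw₁') (Finset.mem_coe.mpr hw₂') hww) hnadj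
    have hux : u ≠ x := fun h => hu₂ (h ▸ hx₂)
    have huy : u ≠ y := fun h => hu₂ (h ▸ hy₂)
    have hAxu : G.Adj x u := hc₁ (Finset.mem_coe.mpr hx₁) (Finset.mem_coe.mpr hu₁) (Ne.symm hux)
    have hAyu : G.Adj y u := hc₁ (Finset.mem_coe.mpr hy₁) (Finset.mem_coe.mpr hu₁) (Ne.symm huy)
    have hwx : w ≠ x := fun h => hnuw (by rw [h]; exact hAxu.symm)
    have hwy : w ≠ y := fun h => hnuw (by rw [h]; exact hAyu.symm)
    have hAxw : G.Adj x w := hc₂ (Finset.mem_coe.mpr hx₂) (Finset.mem_coe.mpr hws₂) (Ne.symm hwx)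
    have hAyw : G.Adj y w := hc₂ (Finset.mem_coe.mpr hy₂) (Finset.mem_coe.mpr hws₂) (Ne.symm hwy)
    have hwns₁ : w ∉ s₁ := fun h =>
      hnuw (hc₁ (Finset.mem_coe.mpr hu₁) (Finset.mem_coe.mpr h) hwu)
    obtain ⟨hQclique, hQcard⟩ := Q_clique_card hreg ha hnoclaw hAyu hAyw hnuw hwu
    set Q := (G.neighborFinset y).filter
      (fun q => q ≠ u ∧ q ≠ w ∧ ¬ G.Adj q u ∧ ¬ G.Adj q w) with hQ
    -- the common neighbours of u, w, y contain (s₁ ∩ s₂) \ {y}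
    have hmsub : (s₁ ∩ s₂).erase y ⊆
        G.neighborFinset u ∩ G.neighborFinset w ∩ G.neighborFinset y := by
      intro v hv
      obtain ⟨hvy, hv'⟩ := Finset.mem_erase.mp hv
      obtain ⟨hv₁, hv₂⟩ := Finset.mem_inter.mp hv'
      have hvu : u ≠ v := fun h => hu₂ (h ▸ hv₂)
      have hvw : w ≠ v := fun h => hwns₁ (h ▸ hv₁)
      simp only [Finset.mem_inter, mem_neighborFinset]
      exact ⟨⟨hc₁ (Finset.mem_coe.mpr hu₁) (Finset.mem_coe.mpr hv₁) hvu,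
        hc₂ (Finset.mem_coe.mpr hws₂) (Finset.mem_coe.mpr hv₂) hvw⟩,
        hc₁ (Finset.mem_coe.mpr hy₁) (Finset.mem_coe.mpr hv₁) (Ne.symm hvy)⟩
    have hmcard : (s₁ ∩ s₂).card - 1 ≤
        (G.neighborFinset u ∩ G.neighborFinset w ∩ G.neighborFinset y).card := by
      have h1 := Finset.card_le_card hmsub
      have h2 : ((s₁ ∩ s₂).erase y).card = (s₁ ∩ s₂).card - 1 :=
        Finset.card_erase_of_mem (Finset.mem_inter.mpr ⟨hy₁, hy₂⟩)
      omega
    have hys : y ∈ s₁ ∩ s₂ := Finset.mem_inter.mpr ⟨hy₁, hy₂⟩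
    have hyscard : 1 ≤ (s₁ ∩ s₂).card := Finset.card_pos.mpr ⟨y, hys⟩
    -- union bound
    have hunion : s₁ ∪ s₂ ⊆ insert x (insert y Λ) := by
      intro v hv
      by_cases h1 : v = x
      · simp [h1]
      by_cases h2 : v = y
      · simp [h2]
      have hv' : G.Adj x v ∧ G.Adj y v := by
        rcases Finset.mem_union.mp hv with h | h
        · exact ⟨hc₁ (Finset.mem_coe.mpr hx₁) (Finset.mem_coe.mpr h) (fun hh => h1 hh.symm),
            hc₁ (Finset.mem_coe.mpr hy₁) (Finset.mem_coe.mpr h) (fun hh => h2 hh.symm)⟩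
        · exact ⟨hc₂ (Finset.mem_coe.mpr hx₂) (Finset.mem_coe.mpr h) (fun hh => h1 hh.symm),
            hc₂ (Finset.mem_coe.mpr hy₂) (Finset.mem_coe.mpr h) (fun hh => h2 hh.symm)⟩
      simp only [Finset.mem_insert, hΛ, Finset.mem_inter, mem_neighborFinset]
      exact Or.inr (Or.inr hv')
    have hunion_card : (s₁ ∪ s₂).card ≤ a₁ + 2 := by
      calc (s₁ ∪ s₂).card ≤ _ := Finset.card_le_card hunion
        _ ≤ (insert y Λ).card + 1 := Finset.card_insert_le _ _
        _ ≤ Λ.card + 1 + 1 := by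
          have := Finset.card_insert_le y Λ
          omega
        _ = a₁ + 2 := by rw [hΛcard]
    have hcup := Finset.card_union_add_card_inter s₁ s₂
    -- final clique: insert y Q
    have hyQ : y ∉ Q := by
      simp only [hQ, Finset.mem_filter, mem_neighborFinset]
      exact fun h => G.irrefl h.1
    have hCclique : G.IsClique ((insert y Q : Finset V) : Set V) := by
      rw [Finset.coe_insert]
      refine hQclique.insert fun b hb hnb => ?_
      have := (Finset.mem_filter.mp (Finset.mem_coe.mp hb)).1
      rwa [mem_neighborFinset] at this
    -- Q is nonempty
    have hQpos : 1 ≤ Q.card := by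
      have : (1 : ℤ) ≤ Q.card := by omega
      exact_mod_cast this
    obtain ⟨q, hq⟩ := Finset.card_pos.mp hQpos
    have hqy : y ≠ q := by
      have := (Finset.mem_filter.mp hq).1
      rw [mem_neighborFinset] at this
      exact G.ne_of_adj this
    have hbound := clique_card_le ha hCclique (Finset.mem_insert_self y Q)
      (Finset.mem_insert_of_mem hq) hqy
    have hinscard : (insert y Q).card = Q.card + 1 := Finset.card_insert_of_notMem hyQ
    omega
  -- k ≤ 3a₁+3
  have hk3 : (k : ℤ) ≤ 3 * a₁ + 3 := by
    by_contra h
    push_neg at h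
    refine greedy_claw hnoclaw x (G.neighborFinset x) (le_refl _) (a₁ : ℤ) ?_
      ⟨y, by rw [mem_neighborFinset]; exact hxy⟩ ?_
    · intro v hv
      have hxv : G.Adj x v := by rwa [mem_neighborFinset] at hv
      exact le_of_eq (by exact_mod_cast ha v x hxv.symm)
    · have h8 : (G.neighborFinset x).card = k := hreg x
      rw [h8]
      omega
  -- Existence
  by_cases hclA : G.IsClique ((insert x (insert y Λ) : Finset V) : Set V)
  · -- the line is {x, y} ∪ Λ itself
    have hxmem : x ∉ insert y Λ := by
      simp only [Finset.mem_insert]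
      exact fun h => h.elim hxny (fun h' => hxΛ h')
    have hscard : (insert x (insert y Λ)).card = a₁ + 2 := by
      rw [Finset.card_insert_of_notMem hxmem, Finset.card_insert_of_notMem hyΛ, hΛcard]
    have hmax : ∀ t : Finset V, G.IsClique (t : Set V) → insert x (insert y Λ) ⊆ t →
        insert x (insert y Λ) = t := by
      intro t ht hsubt
      refine Finset.Subset.antisymm hsubt fun v hv => ?_
      by_cases h1 : v = x
      · simp [h1]
      by_cases h2 : v = y
      · simp [h2]
      have hxv : G.Adj x v := ht (Finset.mem_coe.mpr (hsubt (by simp)))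
        (Finset.mem_coe.mpr hv) (fun hh => h1 hh.symm)
      have hyv : G.Adj y v := ht (Finset.mem_coe.mpr (hsubt (by simp)))
        (Finset.mem_coe.mpr hv) (fun hh => h2 hh.symm)
      simp only [Finset.mem_insert, hΛ, Finset.mem_inter, mem_neighborFinset]
      exact Or.inr (Or.inr ⟨hxv, hyv⟩)
    have hP : IsLine G k a₁ (insert x (insert y Λ)) ∧
        x ∈ insert x (insert y Λ) ∧ y ∈ insert x (insert y Λ) := by
      refine ⟨⟨hclA, hmax, ?_⟩, by simp, by simp⟩
      rw [hscard]
      push_cast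
      omega
    exact ⟨_, hP, fun s hs => key s _ hs hP⟩
  · -- Λ is not a clique together with x, y
    set big := G.neighborFinset x ∪ G.neighborFinset y ∪ {x, y} with hbig
    by_cases hS : ∃ c ∈ Λ, ¬ G.IsClique ((G.neighborFinset c \ big : Finset V) : Set V)
    · obtain ⟨c, hcΛ, hnc⟩ := hS
      obtain ⟨hAxc, hAyc⟩ := hΛmem c hcΛ
      obtain ⟨u, hu, r, hr, hur, hnur⟩ := not_clique_exists hnc
      have hmemS : ∀ z, z ∈ G.neighborFinset c \ big →
          G.Adj c z ∧ z ≠ x ∧ z ≠ y ∧ ¬ G.Adj x z ∧ ¬ G.Adj y z := by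
        intro z hz
        obtain ⟨hz1, hz2⟩ := Finset.mem_sdiff.mp hz
        rw [mem_neighborFinset] at hz1
        simp only [hbig, Finset.mem_union, Finset.mem_insert, Finset.mem_singleton,
          mem_neighborFinset, not_or] at hz2
        exact ⟨hz1, hz2.2.1, hz2.2.2, hz2.1.1, hz2.1.2⟩
      obtain ⟨hcu, hux', huy', hnxu, hnyu⟩ := hmemS u hu
      obtain ⟨hcr, hrx', hry', hnxr, hnyr⟩ := hmemS r hr
      obtain ⟨hQclique, hQcard⟩ := Q_clique_card hreg ha hnoclaw hcu hcr hnur hur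
      set Q := (G.neighborFinset c).filter
        (fun q => q ≠ u ∧ q ≠ r ∧ ¬ G.Adj q u ∧ ¬ G.Adj q r) with hQ
      have hxQ : x ∈ Q := by
        simp only [hQ, Finset.mem_filter, mem_neighborFinset]
        exact ⟨hAxc.symm, Ne.symm hux', Ne.symm hrx', hnxu, hnxr⟩
      have hyQ : y ∈ Q := by
        simp only [hQ, Finset.mem_filter, mem_neighborFinset]
        exact ⟨hAyc.symm, Ne.symm huy', Ne.symm hry', hnyu, hnyr⟩
      have hcQ : c ∉ Q := by
        simp only [hQ, Finset.mem_filter, mem_neighborFinset]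
        exact fun h => G.irrefl h.1
      have hCclique : G.IsClique ((insert c Q : Finset V) : Set V) := by
        rw [Finset.coe_insert]
        refine hQclique.insert fun b hb hnb => ?_
        have := (Finset.mem_filter.mp (Finset.mem_coe.mp hb)).1
        rwa [mem_neighborFinset] at this
      obtain ⟨t, hsubt, htc, htmax⟩ := exists_maximal_clique (insert c Q) hCclique
      have htcard : (t.card : ℤ) ≥ (k : ℤ) - 2 * ((a₁ : ℤ) + 1) + 1 := by
        have h1 : (insert c Q).card = Q.card + 1 := Finset.card_insert_of_notMem hcQ
        have h2 := Finset.card_le_card hsubt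
        omega
      have hP : IsLine G k a₁ t ∧ x ∈ t ∧ y ∈ t :=
        ⟨⟨htc, htmax, htcard⟩, hsubt (Finset.mem_insert_of_mem hxQ),
          hsubt (Finset.mem_insert_of_mem hyQ)⟩
      exact ⟨t, hP, fun s hs => key s t hs hP⟩
    · -- all the sets N(c) \ big are cliques: contradiction via a 4-claw at x
      exfalso
      push_neg at hS
      have hΛne : Λ.Nonempty := by
        rcases Finset.eq_empty_or_nonempty Λ with h | h
        · exfalso
          apply hclA
          rw [h]
          intro a haa b hbb hab
          simp only [Finset.coe_insert, Finset.insert_empty, Set.mem_insert_iff,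
            Finset.coe_singleton, Set.mem_singleton_iff] at haa hbb
          rcases haa with rfl | rfl <;> rcases hbb with rfl | rfl
          · exact absurd rfl hab
          · exact hxy
          · exact hxy.symm
          · exact absurd rfl hab
        · exact h
      refine greedy_claw hnoclaw x Λ Finset.inter_subset_left (3 * (a₁ : ℤ) + 1 - k) ?_
        hΛne ?_
      · intro v hv
        obtain ⟨hAxv, hAyv⟩ := hΛmem v hv
        have hScl := hS v hv
        have h1 : G.neighborFinset v ∩ big ⊆
            (G.neighborFinset v ∩ G.neighborFinset x) ∪
            (G.neighborFinset v ∩ G.neighborFinset y) := by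
          intro z hz
          obtain ⟨hz1, hz2⟩ := Finset.mem_inter.mp hz
          simp only [hbig, Finset.mem_union, Finset.mem_insert, Finset.mem_singleton] at hz2
          simp only [Finset.mem_union, Finset.mem_inter]
          rcases hz2 with (h | h) | (rfl | rfl)
          · exact Or.inl ⟨hz1, h⟩
          · exact Or.inr ⟨hz1, h⟩
          · exact Or.inr ⟨hz1, by rw [mem_neighborFinset]; exact hxy.symm⟩
          · exact Or.inl ⟨hz1, by rw [mem_neighborFinset]; exact hxy⟩
        have h2 := Finset.card_union_add_card_inter
          (G.neighborFinset v ∩ G.neighborFinset x) (G.neighborFinset v ∩ G.neighborFinset y)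
        have h3 : (G.neighborFinset v ∩ G.neighborFinset x) ∩
            (G.neighborFinset v ∩ G.neighborFinset y) = G.neighborFinset v ∩ Λ := by
          rw [hΛ]
          ext z
          simp only [Finset.mem_inter]
          tauto
        rw [h3] at h2
        have h4 : (G.neighborFinset v ∩ G.neighborFinset x).card = a₁ := ha v x hAxv.symm
        have h5 : (G.neighborFinset v ∩ G.neighborFinset y).card = a₁ := ha v y hAyv.symm
        have h6 := Finset.card_sdiff_add_card_inter (G.neighborFinset v) big
        have h7 : (G.neighborFinset v).card = k := hreg v
        have h8 := Finset.card_le_card h1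
        -- N(v) \ big is nonempty
        have h9 : 1 ≤ (G.neighborFinset v \ big).card := by
          have : (1 : ℤ) ≤ ((G.neighborFinset v \ big).card : ℤ) := by omega
          exact_mod_cast this
        obtain ⟨s0, hs0⟩ := Finset.card_pos.mp h9
        have hvs0 : G.Adj v s0 := by
          have := (Finset.mem_sdiff.mp hs0).1
          rwa [mem_neighborFinset] at this
        have hvnb : v ∉ G.neighborFinset v \ big := by
          intro h
          have := (Finset.mem_sdiff.mp h).1
          rw [mem_neighborFinset] at this
          exact G.irrefl this
        have hclv : G.IsClique ((insert v (G.neighborFinset v \ big) : Finset V) : Set V) := by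
          rw [Finset.coe_insert]
          refine hScl.insert fun b hb hnb => ?_
          have := (Finset.mem_sdiff.mp (Finset.mem_coe.mp hb)).1
          rwa [mem_neighborFinset] at this
        have hb2 := clique_card_le ha hclv (Finset.mem_insert_self _ _)
          (Finset.mem_insert_of_mem hs0) (G.ne_of_adj hvs0)
        have hb3 : (insert v (G.neighborFinset v \ big)).card =
            (G.neighborFinset v \ big).card + 1 := Finset.card_insert_of_notMem hvnb
        omega
      · rw [hΛcard]
        omega
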